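/- Let A and K be as in the PVH setup: K = F/δ_K(R_F) where F is free with augmentation ideal I_F, R_F is the free F-bimodule on symbols Y_q mapping via δ_K to generators y_q ∈ I_F² of the relations ideal M, and A is the graded quotient defined via the leading-quadratic-part maps δ_A. Then for each p ≥ 2 the map κ_p^Syz: ker(δ_K|_{R_{≥p}}) → ker(δ_A|_{R_p}) induced by the projection π_p¹: R_{≥p} → R_p is surjective for all p ≥ 2 if and only if δ_K(R_{≥p}) = M ∩ I_F^p for all p ≥ 2. -/

import Mathlib

/-- The free algebra `F` on a set `X` of generators. -/
abbrev FreeAlg (X : Type*) := FreeAlgebra ℚ X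

/-- The augmentation of the free algebra, sending each generator to `1`. -/
noncomputable def aug (X : Type*) : FreeAlg X →ₐ[ℚ] ℚ :=
  FreeAlgebra.lift ℚ (fun _ : X => (1 : ℚ))

/-- The augmentation ideal `I_F` of the free algebra, as a `ℚ`-submodule. -/
noncomputable def augIdeal (X : Type*) : Submodule ℚ (FreeAlg X) :=
  LinearMap.ker (aug X).toLinearMap

/-- `I_F^p / I_F^{p+1}`, the degree-`p` graded piece `X̃^p` of the free algebra. -/
noncomputable abbrev grF (X : Type*) (p : ℕ) :=
  ↥(augIdeal X ^ p) ⧸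
    Submodule.comap (augIdeal X ^ p).subtype (augIdeal X ^ (p + 1))


lemma augIdeal_mul_le (X : Type*) : augIdeal X * augIdeal X ≤ augIdeal X := by
  rw [Submodule.mul_le]
  intro a ha b hb
  simp only [augIdeal, LinearMap.mem_ker, AlgHom.toLinearMap_apply] at *
  rw [map_mul, ha, hb, mul_zero]

lemma augIdeal_pow_succ_le (X : Type*) {p : ℕ} (hp : 1 ≤ p) :
    augIdeal X ^ (p + 1) ≤ augIdeal X ^ p := by
  induction p, hp using Nat.le_induction with
  | base => rw [pow_one, pow_two]; exact augIdeal_mul_le X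
  | succ p hp ih =>
    rw [pow_succ (augIdeal X) (p+1), pow_succ (augIdeal X) p]
    exact mul_le_mul_left ih _

/-- (Proposition: PVH criterion ↔ stability.)  In the PVH setup — `F` the free
algebra on `X` with augmentation ideal `I_F`; `R p` playing the role of the
filtration piece `R_{≥p}` of the free `F`-bimodule on the relation symbols,
`Rdeg p` its degree-`p` graded piece; `δK` the evaluation of relation symbols with
`M = δK(R_F) ⊆ I_F²` the two-sided ideal of relations; and `δA` the homogeneous
(leading quadratic part) truncation of `δK` — the maps
`κ_p^Syz : ker (δK|R_{≥p}) → ker (δA|R_p)` induced by the projections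
`π¹_p : R_{≥p} → R_p` are surjective for all `p ≥ 2` if and only if
`δK(R_{≥p}) = M ∩ I_F^p` for all `p ≥ 2`. -/
theorem pvh_criterion_iff_stability {X : Type*}
    (R : ℕ → Type*) [∀ p, AddCommGroup (R p)] [∀ p, Module ℚ (R p)]
    (Rdeg : ℕ → Type*) [∀ p, AddCommGroup (Rdeg p)] [∀ p, Module ℚ (Rdeg p)]
    (ι : ∀ p, R (p + 1) →ₗ[ℚ] R p)
    (π₁ : ∀ p, R p →ₗ[ℚ] Rdeg p)
    (δK : ∀ p, R p →ₗ[ℚ] FreeAlg X)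
    (hδ : ∀ p r, δK p r ∈ augIdeal X ^ p)
    (δA : ∀ p, Rdeg p →ₗ[ℚ] grF X p)
    -- exactness of the rows `0 → R_{≥p+1} → R_{≥p} → R_p → 0`
    (hι : ∀ p, Function.Injective (ι p))
    (hπ₁ : ∀ p, Function.Surjective (π₁ p))
    (hexact : ∀ p, LinearMap.ker (π₁ p) = LinearMap.range (ι p))
    -- `δK` is compatible with the filtration maps
    (hcomp : ∀ p, (δK p).comp (ι p) = δK (p + 1))
    -- `δA` is the homogeneous truncation of `δK`
    (hδA : ∀ p (r : R p),
      δA p (π₁ p r) = Submodule.Quotient.mk ⟨δK p r, hδ p r⟩)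
    -- `M` is the two-sided ideal of relations, generated in degrees ≥ 2
    (M : Submodule ℚ (FreeAlg X))
    (hM : M = LinearMap.range (δK 2))
    (hM2 : M ≤ augIdeal X * augIdeal X)
    (hMideal : ∀ f g : FreeAlg X, ∀ m ∈ M, f * m * g ∈ M) :
    -- the PVH criterion: all the maps `κ_p^Syz` are surjective …
    (∀ p, 2 ≤ p → ∀ y : Rdeg p, δA p y = 0 →
        ∃ r : R p, δK p r = 0 ∧ π₁ p r = y) ↔
    -- … iff `δK(R_{≥p}) = M ∩ I_F^p` for all `p ≥ 2`
    (∀ p, 2 ≤ p → LinearMap.range (δK p) = M ⊓ augIdeal X ^ p) := by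
  have hsub : ∀ p, 1 ≤ p → augIdeal X ^ (p + 1) ≤ augIdeal X ^ p :=
    fun p hp => augIdeal_pow_succ_le X hp
  constructor
  · intro hsurj p hp
    induction p, hp using Nat.le_induction with
    | base =>
      rw [hM]
      refine le_antisymm (le_inf le_rfl ?_) inf_le_left
      rintro x ⟨r, rfl⟩
      exact hδ 2 r
    | succ p hp ih =>
      apply le_antisymm
      · rintro x ⟨r, rfl⟩
        refine Submodule.mem_inf.2 ⟨?_, hδ _ r⟩
        have h1 : δK (p + 1) r = δK p (ι p r) := (LinearMap.congr_fun (hcomp p) r).symm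
        have h2 : δK p (ι p r) ∈ LinearMap.range (δK p) := ⟨ι p r, rfl⟩
        rw [ih] at h2
        rw [h1]
        exact h2.1
      · rintro x hx
        obtain ⟨hxM, hxI⟩ := Submodule.mem_inf.1 hx
        have hxp : x ∈ LinearMap.range (δK p) := by
          rw [ih]
          exact Submodule.mem_inf.2 ⟨hxM, hsub p (by omega) hxI⟩
        obtain ⟨r, hr⟩ := hxp
        have hA : δA p (π₁ p r) = 0 := by
          rw [hδA p r, Submodule.Quotient.mk_eq_zero]
          simpa [Submodule.mem_comap, hr] using hxI
        obtain ⟨r', hr'0, hr'π⟩ := hsurj p hp _ hA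
        have hker : r - r' ∈ LinearMap.ker (π₁ p) := by
          rw [LinearMap.mem_ker, map_sub, hr'π, sub_self]
        rw [hexact p] at hker
        obtain ⟨s, hs⟩ := hker
        refine ⟨s, ?_⟩
        have := LinearMap.congr_fun (hcomp p) s
        rw [LinearMap.comp_apply, hs, map_sub, hr, hr'0, sub_zero] at this
        exact this.symm
  · intro hst p hp y hy
    obtain ⟨r, rfl⟩ := hπ₁ p y
    have hI : δK p r ∈ augIdeal X ^ (p + 1) := by
      rw [hδA p r, Submodule.Quotient.mk_eq_zero] at hy
      simpa [Submodule.mem_comap] using hy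
    have hMm : δK p r ∈ M := by
      have : δK p r ∈ LinearMap.range (δK p) := ⟨r, rfl⟩
      rw [hst p hp] at this
      exact this.1
    have : δK p r ∈ LinearMap.range (δK (p + 1)) := by
      rw [hst (p + 1) (by omega)]
      exact Submodule.mem_inf.2 ⟨hMm, hI⟩
    obtain ⟨s, hs⟩ := this
    have hs' : δK p (ι p s) = δK p r := by
      have := LinearMap.congr_fun (hcomp p) s
      rw [LinearMap.comp_apply] at this
      rw [this, hs]
    refine ⟨r - ι p s, ?_, ?_⟩
    · rw [map_sub, hs', sub_self]
    · have hk : π₁ p (ι p s) = 0 := by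
        have : ι p s ∈ LinearMap.ker (π₁ p) := by
          rw [hexact p]; exact ⟨s, rfl⟩
        exact this
      rw [map_sub, hk, sub_zero]
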